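/- Define H = u₂u₁³ + u₂v₁² − v₂² − 2u₂²u₁ and K = u₁⁴ − 2v₁v₂ + u₂² − 3u₁²u₂ + u₁v₁² on ℂ⁴. Then H and K are first integrals of the vector field X = v₁∂_{u₁} + v₂∂_{u₂} + (1/2)(2u₂ − 3u₁²)∂_{v₁} + (1/2)(u₁³ + v₁² − 4u₂u₁)∂_{v₂}, i.e., X(H) = 0 and X(K) = 0 identically. -/

import Mathlib

lemma deriv_cmul (c x : ℂ) : deriv (fun y : ℂ => c * y) x = c := by
  simpa using (((hasDerivAt_id x).const_mul c).deriv)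

theorem burnside_first_integrals
    (H K : ℂ → ℂ → ℂ → ℂ → ℂ)
    (hH : ∀ u₁ u₂ v₁ v₂ : ℂ,
      H u₁ u₂ v₁ v₂ = u₂ * u₁ ^ 3 + u₂ * v₁ ^ 2 - v₂ ^ 2 - 2 * u₂ ^ 2 * u₁)
    (hK : ∀ u₁ u₂ v₁ v₂ : ℂ,
      K u₁ u₂ v₁ v₂ = u₁ ^ 4 - 2 * v₁ * v₂ + u₂ ^ 2 - 3 * u₁ ^ 2 * u₂ + u₁ * v₁ ^ 2) :
    ∀ u₁ u₂ v₁ v₂ : ℂ,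
      (v₁ * deriv (fun s => H s u₂ v₁ v₂) u₁ +
       v₂ * deriv (fun s => H u₁ s v₁ v₂) u₂ +
       (1 / 2) * (2 * u₂ - 3 * u₁ ^ 2) * deriv (fun s => H u₁ u₂ s v₂) v₁ +
       (1 / 2) * (u₁ ^ 3 + v₁ ^ 2 - 4 * u₂ * u₁) * deriv (fun s => H u₁ u₂ v₁ s) v₂ = 0) ∧
      (v₁ * deriv (fun s => K s u₂ v₁ v₂) u₁ +
       v₂ * deriv (fun s => K u₁ s v₁ v₂) u₂ +
       (1 / 2) * (2 * u₂ - 3 * u₁ ^ 2) * deriv (fun s => K u₁ u₂ s v₂) v₁ +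
       (1 / 2) * (u₁ ^ 3 + v₁ ^ 2 - 4 * u₂ * u₁) * deriv (fun s => K u₁ u₂ v₁ s) v₂ = 0) := by
  intro u₁ u₂ v₁ v₂
  have eH : ∀ a b c d : ℂ, H a b c d = b * a ^ 3 + b * c ^ 2 - d ^ 2 - 2 * b ^ 2 * a := hH
  have eK : ∀ a b c d : ℂ, K a b c d = a ^ 4 - 2 * c * d + b ^ 2 - 3 * a ^ 2 * b + a * c ^ 2 := hK
  constructor <;>
  · simp only [eH, eK]
    simp (disch := fun_prop) only [deriv_fun_add, deriv_fun_sub, deriv_fun_mul, deriv_pow_field, deriv_const_mul_field', deriv_mul_const_field', deriv_id'', deriv_const', deriv_fun_pow]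
    norm_num [deriv_cmul]
    ring
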